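/- For every integer n ≥ 1, the strong equitable vertex 1-arboricity of the complete bipartite graph K_{2,n} equals ⌈(n+3)/3⌉. -/

import Mathlib

open Finset

/-- The complete multipartite graph with parts of sizes `n 0, …, n (k-1)`. -/
def CompleteMultipartite (k : ℕ) (n : Fin k → ℕ) :
    SimpleGraph (Σ i : Fin k, Fin (n i)) where
  Adj v w := v.1 ≠ w.1
  symm := ⟨fun _ _ h => h.symm⟩
  loopless := ⟨fun _ h => h rfl⟩

/-- The sizes of any two color classes of `C` differ by at most one. -/
def EquitableSizes {V : Type} [Fintype V] {q : ℕ} (C : V → Fin q) : Prop :=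
  ∀ i j : Fin q,
    (univ.filter (fun v => C v = i)).card ≤ (univ.filter (fun v => C v = j)).card + 1

/-- An equitable `(q,1)`-tree-coloring: classes of sizes pairwise differing by at
most one, each inducing a forest of maximum degree at most 1 (equivalently,
maximum degree at most 1 inside each class). -/
def IsEqTreeColoring {V : Type} [Fintype V] (G : SimpleGraph V) (q : ℕ) : Prop :=
  ∃ C : V → Fin q, EquitableSizes C ∧
    ∀ v w x : V, C w = C v → C x = C v → G.Adj v w → G.Adj v x → w = x

/-- An equitable `q`-coloring: a proper coloring with classes of sizes pairwise
differing by at most one. -/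
def IsEqColoring {V : Type} [Fintype V] (G : SimpleGraph V) (q : ℕ) : Prop :=
  ∃ C : V → Fin q, EquitableSizes C ∧ ∀ v w : V, G.Adj v w → C v ≠ C w

/-- The number `d` of Definition 1: the minimum integer `d ≥ ⌈N/q⌉` such that
either two of the `n i` are not divisible by `d`, or some `n i` satisfies
`n i / ⌊n i / d⌋ > d + 1`. -/
noncomputable def dOf (k q : ℕ) (n : Fin k → ℕ) : ℕ :=
  sInf {d : ℕ | ((∑ i, n i) + q - 1) / q ≤ d ∧
    ((∃ i j : Fin k, i ≠ j ∧ ¬ d ∣ n i ∧ ¬ d ∣ n j) ∨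
     (∃ i : Fin k, ((n i : ℚ) / ((n i / d : ℕ) : ℚ) > d + 1)))}

/-- `p(q : n₁, …, n_k) = ⌈n₁/d⌉ + ⋯ + ⌈n_k/d⌉`. -/
noncomputable def pOf (k q : ℕ) (n : Fin k → ℕ) : ℕ :=
  ∑ i, (n i + dOf k q n - 1) / dOf k q n

def gcol (a b : ℕ) (t : ℕ) : ℕ :=
  if t < 3*a then t/3
  else if t < 3*a+2*b then a + (t-3*a)/2
  else a + b + (t - 3*a - 2*b)

def startOf (a b : ℕ) (k : ℕ) : ℕ :=
  if k < a then 3*k else if k < a+b then 3*a + 2*(k-a) else 3*a + 2*b + (k-(a+b))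

def szOf (a b s : ℕ) (k : ℕ) : ℕ :=
  if k < a then 3 else if k < a+b then 2 else if k < a+b+s then 1 else 0

lemma gcol_filter (a b s N : ℕ) (h1 : 3*a+2*b+s = N) (k : ℕ) :
    (range N).filter (fun t => gcol a b t = k) = Ico (startOf a b k) (startOf a b k + szOf a b s k) := by
  ext t
  rw [mem_filter, mem_range, mem_Ico]
  simp only [mem_filter, mem_range, mem_Ico, gcol, startOf, szOf]
  split_ifs <;> omega

def vidx {n : ℕ} (v : Σ i : Fin 2, Fin (![2,n] i)) : ℕ :=
  if v.1 = 0 then n + (v.2 : ℕ) else (v.2 : ℕ)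

lemma vidx_part0 {n : ℕ} (v : Σ i : Fin 2, Fin (![2,n] i)) (h : v.1 = 0) :
    vidx v = n + (v.2 : ℕ) ∧ (v.2 : ℕ) < 2 := by
  obtain ⟨i, j⟩ := v
  cases h
  have hj : (j : ℕ) < 2 := j.isLt
  exact ⟨rfl, hj⟩

lemma vidx_part1 {n : ℕ} (v : Σ i : Fin 2, Fin (![2,n] i)) (h : v.1 = 1) :
    vidx v = (v.2 : ℕ) ∧ (v.2 : ℕ) < n := by
  obtain ⟨i, j⟩ := v
  cases h
  have hj : (j : ℕ) < n := j.isLt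
  exact ⟨rfl, hj⟩

lemma vidx_lt {n : ℕ} (v : Σ i : Fin 2, Fin (![2,n] i)) : vidx v < n + 2 := by
  have h : v.1 = 0 ∨ v.1 = 1 := by omega
  rcases h with h | h
  · have := vidx_part0 v h; omega
  · have := vidx_part1 v h; omega

lemma vidx_inj {n : ℕ} (v w : Σ i : Fin 2, Fin (![2,n] i)) (h : vidx v = vidx w) : v = w := by
  have hv : v.1 = 0 ∨ v.1 = 1 := by omega
  have hw : w.1 = 0 ∨ w.1 = 1 := by omega
  have key : v.1 = w.1 ∧ (v.2 : ℕ) = (w.2 : ℕ) := by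
    rcases hv with hv | hv <;> rcases hw with hw | hw
    · have h1 := vidx_part0 v hv; have h2 := vidx_part0 w hw
      exact ⟨hv.trans hw.symm, by omega⟩
    · have h1 := vidx_part0 v hv; have h2 := vidx_part1 w hw
      exact absurd h (by omega)
    · have h1 := vidx_part1 v hv; have h2 := vidx_part0 w hw
      exact absurd h (by omega)
    · have h1 := vidx_part1 v hv; have h2 := vidx_part1 w hw
      exact ⟨hv.trans hw.symm, by omega⟩
  obtain ⟨i, j⟩ := v; obtain ⟨i', j'⟩ := w
  obtain ⟨h1, h2⟩ := key
  cases h1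
  exact congrArg _ (Fin.ext h2)

lemma vidx_surj {n : ℕ} (t : ℕ) (ht : t < n + 2) :
    ∃ v : Σ i : Fin 2, Fin (![2,n] i), vidx v = t := by
  by_cases h : t < n
  · exact ⟨⟨1, ⟨t, h⟩⟩, (vidx_part1 ⟨1, ⟨t, h⟩⟩ rfl).1⟩
  · refine ⟨⟨0, ⟨t - n, ?_⟩⟩, ?_⟩
    · show t - n < 2
      omega
    · show n + (t - n) = t
      omega

lemma exists_coloring (n q a b s : ℕ) (hq : 1 ≤ q)
    (h1 : 3*a + 2*b + s = n + 2)
    (h2 : a + b + s ≤ q)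
    (h3 : a = 0 ∨ a + b = q)
    (h4 : b = 0 ∨ a + b + s = q)
    (h5 : 2 ≤ 2*b + s) :
    IsEqTreeColoring (CompleteMultipartite 2 ![2,n]) q := by
  have hglt : ∀ t, t < n + 2 → gcol a b t < q := by
    intro t ht
    simp only [gcol]; split_ifs <;> omega
  refine ⟨fun v => ⟨gcol a b (vidx v), hglt _ (vidx_lt v)⟩, ?_, ?_⟩
  · -- equitable
    intro i j
    have key : ∀ k : Fin q, (univ.filter (fun v => (⟨gcol a b (vidx v), hglt _ (vidx_lt v)⟩ : Fin q) = k)).card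
        = szOf a b s (k : ℕ) := by
      intro k
      have hcard : (univ.filter (fun v => (⟨gcol a b (vidx v), hglt _ (vidx_lt v)⟩ : Fin q) = k)).card
          = ((range (n+2)).filter (fun t => gcol a b t = (k : ℕ))).card := by
        apply Finset.card_bij (fun v _ => vidx v)
        · intro v hv
          simp only [mem_filter, mem_range]
          simp only [mem_filter, mem_univ, true_and, Fin.ext_iff] at hv
          exact ⟨vidx_lt v, hv⟩
        · intro v _ w _ h
          exact vidx_inj v w h
        · intro t ht
          simp only [mem_filter, mem_range] at ht
          obtain ⟨v, hv⟩ := vidx_surj t ht.1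
          refine ⟨v, ?_, hv⟩
          simp only [mem_filter, mem_univ, true_and, Fin.ext_iff]
          rw [hv]; exact ht.2
      rw [hcard, gcol_filter a b s (n+2) h1, Nat.card_Ico]
      omega
    rw [key i, key j]
    have hi : (i : ℕ) < q := i.isLt
    have hj : (j : ℕ) < q := j.isLt
    simp only [szOf]
    split_ifs <;> omega
  · -- conflict-free
    intro v w x hw hx havw havx
    have hvw : v.1 ≠ w.1 := havw
    have hvx : v.1 ≠ x.1 := havx
    simp only [Fin.ext_iff] at hw hx
    have h3a : 3*a ≤ n := by omega
    have gkey : ∀ t t', t < n + 2 → t' < n + 2 → gcol a b t = gcol a b t' →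
        3*a ≤ t' → 3*a ≤ t ∧ (t ≤ t' + 1 ∧ t' ≤ t + 1) := by
      intro t t' ht ht' hg ht3
      simp only [gcol] at hg
      split_ifs at hg <;> omega
    have hv01 : v.1 = 0 ∨ v.1 = 1 := by omega
    rcases hv01 with hv | hv
    · -- v part 0, w x part 1
      have hw1 : w.1 = 1 := by omega
      have hx1 : x.1 = 1 := by omega
      have pv := vidx_part0 v hv
      have pw := vidx_part1 w hw1
      have px := vidx_part1 x hx1
      have kw := gkey (vidx w) (vidx v) (vidx_lt w) (vidx_lt v) hw (by omega)
      have kx := gkey (vidx x) (vidx v) (vidx_lt x) (vidx_lt v) hx (by omega)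
      exact vidx_inj w x (by omega)
    · -- v part 1, w x part 0
      have hw0 : w.1 = 0 := by omega
      have hx0 : x.1 = 0 := by omega
      have pv := vidx_part1 v hv
      have pw := vidx_part0 w hw0
      have px := vidx_part0 x hx0
      have kw := gkey (vidx v) (vidx w) (vidx_lt v) (vidx_lt w) hw.symm (by omega)
      have kx := gkey (vidx v) (vidx x) (vidx_lt v) (vidx_lt x) hx.symm (by omega)
      exact vidx_inj w x (by omega)

lemma card_vtx (n : ℕ) : Fintype.card (Σ i : Fin 2, Fin (![2,n] i)) = n + 2 := by
  rw [Fintype.card_sigma]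
  simp [Fin.sum_univ_two]
  omega

lemma no_coloring (n q : ℕ) (hn : 1 ≤ n) (hq : 1 ≤ q) (h3q : 3*q ≤ n + 2) :
    ¬ IsEqTreeColoring (CompleteMultipartite 2 ![2,n]) q := by
  rintro ⟨C, hEq, hDeg⟩
  classical
  let u0 : (Σ i : Fin 2, Fin (![2,n] i)) := ⟨0, ⟨0, by show (0:ℕ) < 2; omega⟩⟩
  let u1 : (Σ i : Fin 2, Fin (![2,n] i)) := ⟨0, ⟨1, by show (1:ℕ) < 2; omega⟩⟩
  have e0 : vidx u0 = n := rfl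
  have e1 : vidx u1 = n + 1 := rfl
  have hne : u0 ≠ u1 := by
    intro h
    have := congrArg vidx h
    omega
  have hu01 : u0.1 = 0 := rfl
  have hu11 : u1.1 = 0 := rfl
  have hchar0 : ∀ v : (Σ i : Fin 2, Fin (![2,n] i)), v.1 = 0 → v = u0 ∨ v = u1 := by
    intro v hv
    have pv := vidx_part0 v hv
    have : vidx v = n ∨ vidx v = n + 1 := by omega
    rcases this with h | h
    · exact Or.inl (vidx_inj v u0 (by omega))
    · exact Or.inr (vidx_inj v u1 (by omega))
  have hadj : ∀ v w : (Σ i : Fin 2, Fin (![2,n] i)), v.1 ≠ w.1 → (CompleteMultipartite 2 ![2,n]).Adj v w := fun v w h => h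
  -- general bound for classes containing a part-0 vertex alone among part-0s
  have genB : ∀ z z' : (Σ i : Fin 2, Fin (![2,n] i)), (z = u0 ∧ z' = u1 ∨ z = u1 ∧ z' = u0) → C z ≠ C z' →
      (univ.filter fun v => C v = C z).card ≤ 2 := by
    intro z z' hzz hCne
    have hz0 : z.1 = 0 := by rcases hzz with ⟨rfl, _⟩ | ⟨rfl, _⟩ <;> rfl
    have hcharz : ∀ v : (Σ i : Fin 2, Fin (![2,n] i)), v ∈ univ.filter (fun v => C v = C z) → v = z ∨ v.1 = 1 := by
      intro v hv
      simp only [mem_filter, mem_univ, true_and] at hv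
      have h01 : v.1 = 0 ∨ v.1 = 1 := by omega
      rcases h01 with h0 | h1
      · rcases hchar0 v h0 with rfl | rfl
        · rcases hzz with ⟨rfl, _⟩ | ⟨_, rfl⟩
          · exact Or.inl rfl
          · exact absurd hv.symm hCne
        · rcases hzz with ⟨_, rfl⟩ | ⟨rfl, _⟩
          · exact absurd hv.symm hCne
          · exact Or.inl rfl
      · exact Or.inr h1
    have key : ∀ w x : (Σ i : Fin 2, Fin (![2,n] i)), w ∈ univ.filter (fun v => C v = C z) →
        x ∈ univ.filter (fun v => C v = C z) → w ≠ x → w.1 = 1 → x.1 = 1 → False := by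
      intro w x hwm hxm hwx hw1 hx1
      simp only [mem_filter, mem_univ, true_and] at hwm hxm
      exact hwx (hDeg z w x hwm hxm (hadj z w (by omega)) (hadj z x (by omega)))
    by_contra hcard
    push_neg at hcard
    set sF := univ.filter (fun v => C v = C z) with hsF
    obtain ⟨v1, hv1m⟩ := Finset.card_pos.mp (show 0 < sF.card by omega)
    have h2 : 1 < (sF.erase v1).card := by
      rw [Finset.card_erase_of_mem hv1m]; omega
    obtain ⟨v2, hv2m, v3, hv3m, hne23⟩ := Finset.one_lt_card.mp h2
    obtain ⟨hne21, hv2s⟩ := Finset.mem_erase.mp hv2m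
    obtain ⟨hne31, hv3s⟩ := Finset.mem_erase.mp hv3m
    rcases hcharz v1 hv1m with e1' | e1' <;> rcases hcharz v2 hv2s with e2' | e2' <;>
      rcases hcharz v3 hv3s with e3' | e3'
    · exact hne21 (e2'.trans e1'.symm)
    · exact hne21 (e2'.trans e1'.symm)
    · exact hne31 (e3'.trans e1'.symm)
    · exact key v2 v3 hv2s hv3s hne23 e2' e3'
    · exact hne23 (e2'.trans e3'.symm)
    · exact key v1 v3 hv1m hv3s (Ne.symm hne31) e1' e3'
    · exact key v1 v2 hv1m hv2s (Ne.symm hne21) e1' e2'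
    · exact key v1 v2 hv1m hv2s (Ne.symm hne21) e1' e2'
  -- class of u0 when C u0 = C u1
  have genA : C u0 = C u1 → (univ.filter fun v => C v = C u0).card ≤ 2 := by
    intro hC
    have hsub : univ.filter (fun v => C v = C u0) ⊆ {u0, u1} := by
      intro v hv
      simp only [mem_filter, mem_univ, true_and] at hv
      have h01 : v.1 = 0 ∨ v.1 = 1 := by omega
      rcases h01 with h0 | h1
      · rcases hchar0 v h0 with rfl | rfl
        · simp
        · simp
      · exfalso
        exact hne (hDeg v u0 u1 hv.symm (hC ▸ hv.symm) (hadj v u0 (by omega)) (hadj v u1 (by omega)))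
    calc (univ.filter fun v => C v = C u0).card ≤ ({u0, u1} : Finset (Σ i : Fin 2, Fin (![2,n] i))).card :=
          Finset.card_le_card hsub
      _ ≤ 2 := Finset.card_insert_le _ _ |>.trans (by simp)
  -- total count
  have hsum : (n + 2 : ℕ) = ∑ j : Fin q, (univ.filter fun v => C v = j).card := by
    rw [← Finset.card_eq_sum_card_fiberwise (fun v (_ : v ∈ univ) => mem_univ (C v))]
    rw [Finset.card_univ, card_vtx]
  by_cases hC : C u0 = C u1
  · -- case A
    have hb := genA hC
    have hbound : ∀ j : Fin q, (univ.filter fun v => C v = j).card ≤ 3 := by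
      intro j
      have := hEq j (C u0)
      omega
    rw [← Finset.add_sum_erase univ _ (mem_univ (C u0))] at hsum
    have hrest : ∑ j ∈ univ.erase (C u0), (univ.filter fun v => C v = j).card ≤
        (univ.erase (C u0)).card * 3 := by
      calc _ ≤ ∑ _j ∈ univ.erase (C u0), 3 := Finset.sum_le_sum (fun j _ => hbound j)
        _ = _ := by rw [Finset.sum_const, smul_eq_mul]
    have hcerase : (univ.erase (C u0)).card = q - 1 := by
      rw [Finset.card_erase_of_mem (mem_univ _), Finset.card_univ, Fintype.card_fin]
    omega
  · -- case B
    have hb0 := genB u0 u1 (Or.inl ⟨rfl, rfl⟩) hC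
    have hb1 := genB u1 u0 (Or.inr ⟨rfl, rfl⟩) (Ne.symm hC)
    have hbound : ∀ j : Fin q, (univ.filter fun v => C v = j).card ≤ 3 := by
      intro j
      have := hEq j (C u0)
      omega
    have hq2 : 2 ≤ q := by
      have h1 : (C u0 : ℕ) ≠ (C u1 : ℕ) := fun h => hC (Fin.ext h)
      have := (C u0).isLt
      have := (C u1).isLt
      omega
    have hmem1 : C u1 ∈ univ.erase (C u0) := Finset.mem_erase.mpr ⟨Ne.symm hC, mem_univ _⟩
    rw [← Finset.add_sum_erase univ _ (mem_univ (C u0)),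
        ← Finset.add_sum_erase _ _ hmem1] at hsum
    have hrest : ∑ j ∈ (univ.erase (C u0)).erase (C u1), (univ.filter fun v => C v = j).card ≤
        ((univ.erase (C u0)).erase (C u1)).card * 3 := by
      calc _ ≤ ∑ _j ∈ (univ.erase (C u0)).erase (C u1), 3 :=
            Finset.sum_le_sum (fun j _ => hbound j)
        _ = _ := by rw [Finset.sum_const, smul_eq_mul]
    have hcerase : ((univ.erase (C u0)).erase (C u1)).card = q - 2 := by
      rw [Finset.card_erase_of_mem hmem1, Finset.card_erase_of_mem (mem_univ _),
          Finset.card_univ, Fintype.card_fin]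
      omega
    omega


theorem stmt1 (n : ℕ) (hn : 1 ≤ n) :
    IsLeast {p : ℕ | ∀ q, p ≤ q →
        IsEqTreeColoring (CompleteMultipartite 2 ![2, n]) q}
      ⌈((n : ℚ) + 3) / 3⌉₊ := by
  set P := ⌈((n : ℚ) + 3) / 3⌉₊ with hP
  have hP1 : n + 3 ≤ 3 * P := by
    have h := Nat.le_ceil (((n:ℚ)+3)/3)
    rw [← hP] at h
    have h2 : (n : ℚ) + 3 ≤ 3 * (P : ℚ) := by
      rw [div_le_iff₀ (by norm_num)] at h
      linarith
    exact_mod_cast h2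
  have hP2 : 3 * P ≤ n + 5 := by
    have h35 : (n : ℚ) + 3 ≤ 3 * (((n+5)/3 : ℕ) : ℚ) := by
      have : n + 3 ≤ 3 * ((n+5)/3) := by omega
      exact_mod_cast this
    have h : P ≤ (n+5)/3 := by
      rw [hP]
      apply Nat.ceil_le.mpr
      rw [div_le_iff₀ (by norm_num)]
      linarith
    omega
  constructor
  · intro q hq
    have h3q : n + 3 ≤ 3 * q := by omega
    refine exists_coloring n q (n+2-2*q) (min (n+2-q) (3*q-(n+2)))
      (n+2 - 3*(n+2-2*q) - 2*(min (n+2-q) (3*q-(n+2)))) ?_ ?_ ?_ ?_ ?_ ?_ <;> omega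
  · intro p hp
    by_contra hcon
    push_neg at hcon
    exact no_coloring n (P-1) hn (by omega) (by omega) (hp (P-1) (by omega))
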